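/- arXiv:1705.08191 — 2 statements merged into one kernel-verified Lean document; each statement's English description precedes it below -/
import Mathlib

section
/- Let p be a prime, a, b ≥ 1 and n ≥ 1. Let g ∈ Mat_{a+b}(ℚ_p) have block form (A, B; C, D) with A of size a×a, D of size b×b, such that every entry of A − 1_a, D − 1_b, B and C lies in p^n·ℤ_p. Then g is invertible and there exist unique matrices C', A', D', B' with all entries of A' − 1_a, D' − 1_b, B', C' in p^n·ℤ_p such that g = L·M·U, where L = (1_a, 0; C', 1_b), M = (A', 0; 0, D') and U = (1_a, B'; 0, 1_b). Moreover, there also exist unique matrices B'', A'', D'', C'' with the same congruence conditions such that g = (1_a, B''; 0, 1_b)·(A'', 0; 0, D'')·(1_a, 0; C'', 1_b). -/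
open Matrix

namespace Stmt6Aux

variable {p : ℕ} [hp : Fact p.Prime]

theorem norm_sub_le_max (x y : ℚ_[p]) : ‖x - y‖ ≤ max ‖x‖ ‖y‖ := by
  have := Padic.nonarchimedean x (-y)
  simpa [sub_eq_add_neg] using this

theorem norm_sum_le {ι : Type*} (s : Finset ι) (f : ι → ℚ_[p]) {c : ℝ} (hc : 0 ≤ c)
    (h : ∀ i ∈ s, ‖f i‖ ≤ c) : ‖∑ i ∈ s, f i‖ ≤ c := by
  classical
  induction s using Finset.induction_on with
  | empty => simpa using hc
  | insert x s' hx ih =>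
    rw [Finset.sum_insert hx]
    refine le_trans (Padic.nonarchimedean _ _) (max_le (h _ (Finset.mem_insert_self _ _))
      (ih fun i hi => h i (Finset.mem_insert_of_mem hi)))

theorem mul_bound {m k l : ℕ} (X : Matrix (Fin m) (Fin k) ℚ_[p]) (Y : Matrix (Fin k) (Fin l) ℚ_[p])
    {s t : ℝ} (hs : 0 ≤ s) (ht : 0 ≤ t) (hX : ∀ i j, ‖X i j‖ ≤ s) (hY : ∀ i j, ‖Y i j‖ ≤ t) :
    ∀ i j, ‖(X * Y) i j‖ ≤ s * t := by
  intro i j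
  rw [Matrix.mul_apply]
  refine norm_sum_le _ _ (mul_nonneg hs ht) fun k _ => ?_
  rw [norm_mul]
  exact mul_le_mul (hX i k) (hY k j) (norm_nonneg _) hs

theorem one_entry_le {m : ℕ} (i j : Fin m) : ‖(1 : Matrix (Fin m) (Fin m) ℚ_[p]) i j‖ ≤ 1 := by
  rw [Matrix.one_apply]
  split <;> simp

theorem isUnit_det_near {m : ℕ} (M : Matrix (Fin m) (Fin m) ℚ_[p])
    (h : ∀ i j, ‖(M - 1) i j‖ < 1) : IsUnit M.det := by
  have hle : ∀ i j, ‖M i j‖ ≤ 1 := fun i j => by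
    have : M i j = (M - 1) i j + (1 : Matrix (Fin m) (Fin m) ℚ_[p]) i j := by
      simp [Matrix.sub_apply]
    rw [this]
    exact le_trans (Padic.nonarchimedean _ _) (max_le (h i j).le (one_entry_le i j))
  set M' : Matrix (Fin m) (Fin m) ℤ_[p] := fun i j => ⟨M i j, hle i j⟩ with hM'
  have hmap : M'.map (PadicInt.Coe.ringHom (p := p)) = M := by
    ext i j; rfl
  have hres : M'.map (PadicInt.toZMod : ℤ_[p] →+* ZMod p) = 1 := by
    ext i j
    have hmem : M' i j - (1 : Matrix (Fin m) (Fin m) ℤ_[p]) i j ∈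
        IsLocalRing.maximalIdeal ℤ_[p] := by
      have hlt : ‖M' i j - (1 : Matrix (Fin m) (Fin m) ℤ_[p]) i j‖ < 1 := by
        have hco : ((M' i j - (1 : Matrix (Fin m) (Fin m) ℤ_[p]) i j : ℤ_[p]) : ℚ_[p]) =
            (M - 1) i j := by
          rcases eq_or_ne i j with hij | hij
          · subst hij; simp [Matrix.sub_apply, hM']; exact PadicInt.coe_sub _ _
          · simp [Matrix.sub_apply, Matrix.one_apply_ne hij, hM']; exact congrArg Subtype.val (sub_zero _)
        rw [PadicInt.norm_def, hco]
        exact h i j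
      rw [IsLocalRing.mem_maximalIdeal, mem_nonunits_iff, PadicInt.isUnit_iff]
      exact fun he => absurd hlt (by rw [he]; exact lt_irrefl 1)
    rw [← PadicInt.ker_toZMod, RingHom.mem_ker, map_sub, sub_eq_zero] at hmem
    rw [Matrix.map_apply, hmem]
    rcases eq_or_ne i j with hij | hij
    · subst hij; simp
    · simp [Matrix.one_apply_ne hij]
  have hdet1 : (PadicInt.toZMod : ℤ_[p] →+* ZMod p) M'.det = 1 := by
    rw [RingHom.map_det]
    have : (PadicInt.toZMod : ℤ_[p] →+* ZMod p).mapMatrix M' = M'.map PadicInt.toZMod := rfl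
    rw [this, hres, det_one]
  have hunit : IsUnit M'.det := by
    rw [← IsLocalRing.notMem_maximalIdeal, ← PadicInt.ker_toZMod, RingHom.mem_ker]
    intro h0
    rw [h0] at hdet1
    exact one_ne_zero hdet1.symm
  have : (PadicInt.Coe.ringHom (p := p)) M'.det = M.det := by
    rw [RingHom.map_det]
    have h2 : (PadicInt.Coe.ringHom (p := p)).mapMatrix M' = M'.map (PadicInt.Coe.ringHom (p := p)) := rfl
    rw [h2, hmap]
  rw [← this]
  refine isUnit_iff_ne_zero.mpr fun hc => hunit.ne_zero ?_
  have hcc : ((M'.det : ℤ_[p]) : ℚ_[p]) = 0 := hc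
  exact Subtype.coe_injective (by simpa using hcc)

end Stmt6Aux

namespace Stmt6Aux2
open Stmt6Aux
variable {p : ℕ} [hp : Fact p.Prime]

theorem inv_near {m : ℕ} (hm : 0 < m) (M : Matrix (Fin m) (Fin m) ℚ_[p]) {ε : ℝ}
    (hε0 : 0 < ε) (hε1 : ε < 1) (h : ∀ i j, ‖(M - 1) i j‖ ≤ ε) :
    IsUnit M.det ∧ (∀ i j, ‖M⁻¹ i j‖ ≤ 1) ∧ (∀ i j, ‖(M⁻¹ - 1) i j‖ ≤ ε) := by
  haveI : Nonempty (Fin m) := ⟨⟨0, hm⟩⟩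
  have hdet : IsUnit M.det := isUnit_det_near M fun i j => lt_of_le_of_lt (h i j) hε1
  have key : M⁻¹ = 1 - M⁻¹ * (M - 1) := by
    rw [Matrix.mul_sub, Matrix.nonsing_inv_mul M hdet, Matrix.mul_one, sub_sub_cancel]
  set t : ℝ := Finset.univ.sup' Finset.univ_nonempty
      (fun i : Fin m => Finset.univ.sup' Finset.univ_nonempty fun j : Fin m => ‖M⁻¹ i j‖) with ht
  have hge : ∀ i j, ‖M⁻¹ i j‖ ≤ t := fun i j =>
    le_trans (Finset.le_sup' (fun j : Fin m => ‖M⁻¹ i j‖) (Finset.mem_univ j))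
      (Finset.le_sup'
        (fun i : Fin m => Finset.univ.sup' Finset.univ_nonempty fun j : Fin m => ‖M⁻¹ i j‖)
        (Finset.mem_univ i))
  have ht0 : 0 ≤ t := le_trans (norm_nonneg _) (hge ⟨0, hm⟩ ⟨0, hm⟩)
  have hmul : ∀ i j, ‖(M⁻¹ * (M - 1)) i j‖ ≤ t * ε := mul_bound _ _ ht0 hε0.le hge h
  have hte : t ≤ max 1 (t * ε) := by
    rw [ht]
    refine Finset.sup'_le _ _ fun i _ => Finset.sup'_le _ _ fun j _ => ?_
    have he : M⁻¹ i j = (1 : Matrix (Fin m) (Fin m) ℚ_[p]) i j - (M⁻¹ * (M - 1)) i j := by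
      conv_lhs => rw [key]
      simp [Matrix.sub_apply]
    rw [he]
    exact le_trans (norm_sub_le_max _ _) (max_le_max (one_entry_le i j) (hmul i j))
  have ht1 : t ≤ 1 := by
    by_contra hgt
    push_neg at hgt
    have h2 : t * ε < t := by nlinarith
    exact lt_irrefl _ (lt_of_le_of_lt hte (max_lt hgt h2))
  refine ⟨hdet, fun i j => le_trans (hge i j) ht1, fun i j => ?_⟩
  have he : (M⁻¹ - 1) i j = -((M⁻¹ * (M - 1)) i j) := by
    conv_lhs => rw [key]
    simp [Matrix.sub_apply]
  rw [he, norm_neg]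
  have := mul_bound M⁻¹ (M - 1) zero_le_one hε0.le (fun i j => le_trans (hge i j) ht1) h i j
  simpa using this

end Stmt6Aux2

open Stmt6Aux Stmt6Aux2 in
/-- Principal congruence subgroups of `GL_{a+b}(ℤ_p)` are totally decomposed
with respect to the block parabolic: unique `L·M·U` and `U·M·L` factorizations
with all factors in the same congruence subgroup. -/
theorem stmt_6 (p : ℕ) [Fact p.Prime] (a b n : ℕ) (ha : 1 ≤ a) (hb : 1 ≤ b) (hn : 1 ≤ n)
    (A : Matrix (Fin a) (Fin a) ℚ_[p]) (B : Matrix (Fin a) (Fin b) ℚ_[p])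
    (C : Matrix (Fin b) (Fin a) ℚ_[p]) (D : Matrix (Fin b) (Fin b) ℚ_[p])
    (hA : ∀ i j, ‖(A - 1) i j‖ ≤ (p : ℝ) ^ (-(n : ℤ)))
    (hB : ∀ i j, ‖B i j‖ ≤ (p : ℝ) ^ (-(n : ℤ)))
    (hC : ∀ i j, ‖C i j‖ ≤ (p : ℝ) ^ (-(n : ℤ)))
    (hD : ∀ i j, ‖(D - 1) i j‖ ≤ (p : ℝ) ^ (-(n : ℤ))) :
    IsUnit (fromBlocks A B C D).det ∧
    (∃! q : Matrix (Fin b) (Fin a) ℚ_[p] × Matrix (Fin a) (Fin a) ℚ_[p] ×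
        Matrix (Fin b) (Fin b) ℚ_[p] × Matrix (Fin a) (Fin b) ℚ_[p],
      (∀ i j, ‖q.1 i j‖ ≤ (p : ℝ) ^ (-(n : ℤ))) ∧
      (∀ i j, ‖(q.2.1 - 1) i j‖ ≤ (p : ℝ) ^ (-(n : ℤ))) ∧
      (∀ i j, ‖(q.2.2.1 - 1) i j‖ ≤ (p : ℝ) ^ (-(n : ℤ))) ∧
      (∀ i j, ‖q.2.2.2 i j‖ ≤ (p : ℝ) ^ (-(n : ℤ))) ∧
      fromBlocks A B C D =
        fromBlocks 1 0 q.1 1 * fromBlocks q.2.1 0 0 q.2.2.1 * fromBlocks 1 q.2.2.2 0 1) ∧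
    (∃! q : Matrix (Fin a) (Fin b) ℚ_[p] × Matrix (Fin a) (Fin a) ℚ_[p] ×
        Matrix (Fin b) (Fin b) ℚ_[p] × Matrix (Fin b) (Fin a) ℚ_[p],
      (∀ i j, ‖q.1 i j‖ ≤ (p : ℝ) ^ (-(n : ℤ))) ∧
      (∀ i j, ‖(q.2.1 - 1) i j‖ ≤ (p : ℝ) ^ (-(n : ℤ))) ∧
      (∀ i j, ‖(q.2.2.1 - 1) i j‖ ≤ (p : ℝ) ^ (-(n : ℤ))) ∧
      (∀ i j, ‖q.2.2.2 i j‖ ≤ (p : ℝ) ^ (-(n : ℤ))) ∧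
      fromBlocks A B C D =
        fromBlocks 1 q.1 0 1 * fromBlocks q.2.1 0 0 q.2.2.1 * fromBlocks 1 0 q.2.2.2 1) := by
  have hp1 : (1 : ℝ) < (p : ℝ) := by exact_mod_cast (Fact.out : p.Prime).one_lt
  set ε : ℝ := (p : ℝ) ^ (-(n : ℤ)) with hεdef
  have hε0 : 0 < ε := zpow_pos (by linarith) _
  have hε1 : ε < 1 := by
    rw [hεdef, _root_.zpow_neg]
    have h1 : (1 : ℝ) < (p : ℝ) ^ (n : ℤ) := one_lt_zpow₀ hp1 (by exact_mod_cast hn)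
    exact inv_lt_one_of_one_lt₀ h1
  have hεε : ε * ε ≤ ε := by nlinarith
  obtain ⟨hdA, hAinv1, hAinvn⟩ := inv_near (by omega) A hε0 hε1 hA
  obtain ⟨hdD, hDinv1, hDinvn⟩ := inv_near (by omega) D hε0 hε1 hD
  -- bounds on composite matrices
  have hCAinv : ∀ i j, ‖(C * A⁻¹) i j‖ ≤ ε := fun i j => by
    simpa using mul_bound C A⁻¹ hε0.le zero_le_one hC hAinv1 i j
  have hAinvB : ∀ i j, ‖(A⁻¹ * B) i j‖ ≤ ε := fun i j => by
    simpa using mul_bound A⁻¹ B zero_le_one hε0.le hAinv1 hB i j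
  have hCAB : ∀ i j, ‖(C * (A⁻¹ * B)) i j‖ ≤ ε := fun i j =>
    le_trans (mul_bound C (A⁻¹ * B) hε0.le hε0.le hC hAinvB i j) hεε
  have hBDinv : ∀ i j, ‖(B * D⁻¹) i j‖ ≤ ε := fun i j => by
    simpa using mul_bound B D⁻¹ hε0.le zero_le_one hB hDinv1 i j
  have hDinvC : ∀ i j, ‖(D⁻¹ * C) i j‖ ≤ ε := fun i j => by
    simpa using mul_bound D⁻¹ C zero_le_one hε0.le hDinv1 hC i j
  have hBDC : ∀ i j, ‖(B * (D⁻¹ * C)) i j‖ ≤ ε := fun i j =>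
    le_trans (mul_bound B (D⁻¹ * C) hε0.le hε0.le hB hDinvC i j) hεε
  have hD' : ∀ i j, ‖((D - C * (A⁻¹ * B) - 1 : Matrix (Fin b) (Fin b) ℚ_[p])) i j‖ ≤ ε := fun i j => by
    have he : D - C * (A⁻¹ * B) - 1 = (D - 1) - C * (A⁻¹ * B) := by abel
    rw [he, Matrix.sub_apply]
    exact le_trans (norm_sub_le_max _ _) (max_le (hD i j) (hCAB i j))
  have hA' : ∀ i j, ‖((A - B * (D⁻¹ * C) - 1 : Matrix (Fin a) (Fin a) ℚ_[p])) i j‖ ≤ ε := fun i j => by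
    have he : A - B * (D⁻¹ * C) - 1 = (A - 1) - B * (D⁻¹ * C) := by abel
    rw [he, Matrix.sub_apply]
    exact le_trans (norm_sub_le_max _ _) (max_le (hA i j) (hBDC i j))
  -- the LMU product identity
  have hprod1 : fromBlocks (1 : Matrix (Fin a) (Fin a) ℚ_[p]) 0 (C * A⁻¹) 1 *
      fromBlocks A 0 0 (D - C * (A⁻¹ * B)) *
      fromBlocks (1 : Matrix (Fin a) (Fin a) ℚ_[p]) (A⁻¹ * B) 0 1 = fromBlocks A B C D := by
    rw [fromBlocks_multiply, fromBlocks_multiply]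
    simp only [Matrix.one_mul, Matrix.mul_one, Matrix.zero_mul, Matrix.mul_zero, add_zero,
      zero_add, Matrix.nonsing_inv_mul_cancel_right A C hdA,
      Matrix.mul_nonsing_inv_cancel_left A B hdA]
    rw [Matrix.fromBlocks_inj]
    exact ⟨rfl, rfl, rfl, by abel⟩
  have hprod2 : fromBlocks (1 : Matrix (Fin a) (Fin a) ℚ_[p]) (B * D⁻¹) 0 1 *
      fromBlocks (A - B * (D⁻¹ * C)) 0 0 D *
      fromBlocks (1 : Matrix (Fin a) (Fin a) ℚ_[p]) 0 (D⁻¹ * C) 1 = fromBlocks A B C D := by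
    rw [fromBlocks_multiply, fromBlocks_multiply]
    simp only [Matrix.one_mul, Matrix.mul_one, Matrix.zero_mul, Matrix.mul_zero, add_zero,
      zero_add, Matrix.nonsing_inv_mul_cancel_right D B hdD,
      Matrix.mul_nonsing_inv_cancel_left D C hdD]
    rw [Matrix.fromBlocks_inj]
    exact ⟨by abel, rfl, rfl, rfl⟩
  have hdD' : IsUnit (D - C * (A⁻¹ * B)).det :=
    isUnit_det_near _ fun i j => lt_of_le_of_lt (hD' i j) hε1
  refine ⟨?_, ?_, ?_⟩
  · rw [← hprod1]
    simp only [Matrix.det_mul, Matrix.det_fromBlocks_zero₁₂, Matrix.det_fromBlocks_zero₂₁,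
      Matrix.det_one, one_mul, mul_one]
    exact hdA.mul hdD'
  · refine ⟨(C * A⁻¹, A, D - C * (A⁻¹ * B), A⁻¹ * B), ⟨hCAinv, hA, hD', hAinvB, hprod1.symm⟩, ?_⟩
    rintro ⟨C₂, A₂, D₂, B₂⟩ ⟨-, -, -, -, heq⟩
    simp only at heq
    rw [fromBlocks_multiply, fromBlocks_multiply] at heq
    simp only [Matrix.one_mul, Matrix.mul_one, Matrix.zero_mul, Matrix.mul_zero, add_zero,
      zero_add] at heq
    rw [Matrix.fromBlocks_inj] at heq
    obtain ⟨h11, h12, h21, h22⟩ := heq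
    subst h11
    have hB₂ : B₂ = A⁻¹ * B := by
      rw [h12, Matrix.nonsing_inv_mul_cancel_left A B₂ hdA]
    have hC₂ : C₂ = C * A⁻¹ := by
      rw [h21, Matrix.mul_nonsing_inv_cancel_right A C₂ hdA]
    have hD₂ : D₂ = D - C * (A⁻¹ * B) := by
      rw [h22, hC₂, hB₂, Matrix.nonsing_inv_mul_cancel_right A C hdA]
      abel
    rw [hB₂, hC₂, hD₂]
  · refine ⟨(B * D⁻¹, A - B * (D⁻¹ * C), D, D⁻¹ * C), ⟨hBDinv, hA', hD, hDinvC, hprod2.symm⟩, ?_⟩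
    rintro ⟨B₂, A₂, D₂, C₂⟩ ⟨-, -, -, -, heq⟩
    simp only at heq
    rw [fromBlocks_multiply, fromBlocks_multiply] at heq
    simp only [Matrix.one_mul, Matrix.mul_one, Matrix.zero_mul, Matrix.mul_zero, add_zero,
      zero_add] at heq
    rw [Matrix.fromBlocks_inj] at heq
    obtain ⟨h11, h12, h21, h22⟩ := heq
    subst h22
    have hB₂ : B₂ = B * D⁻¹ := by
      rw [h12, Matrix.mul_nonsing_inv_cancel_right D B₂ hdD]
    have hC₂ : C₂ = D⁻¹ * C := by
      rw [h21, Matrix.nonsing_inv_mul_cancel_left D C₂ hdD]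
    have hA₂ : A₂ = A - B * (D⁻¹ * C) := by
      rw [h11, hB₂, hC₂, Matrix.nonsing_inv_mul_cancel_right D B hdD]
      abel
    rw [hB₂, hC₂, hA₂]
end

section
/- Let p be a prime and n ≥ 1. Let g ∈ GL_2(ℚ_p) be of the form g = t·(1, 0; c, 1), where t is an invertible upper triangular matrix and c ∈ ℚ_p with |c| > p^n. Then there exists x ∈ ℚ_p with |x| ≤ p^{-n} such that the (2,2) entry of g·(1, x; 0, 1) is zero; in particular, g·(1, x; 0, 1) does not lie in the big cell B·B̄ of GL_2(ℚ_p) (B the upper triangular and B̄ the lower triangular Borel subgroup), so g ∈ (G − B·B̄)·(U ∩ K_n). -/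
open Matrix

/-- Rank-one instance of the geometric lemma: if `g = t·(1,0;c,1)` with `t`
upper triangular invertible and `|c| > p^n`, then multiplying `g` on the right
by a suitable element of `U ∩ K_n` kills the `(2,2)` entry, so
`g ∈ (G − B·B̄)·(U ∩ K_n)`. -/
theorem stmt_11 (p : ℕ) [Fact p.Prime] (n : ℕ) (hn : 1 ≤ n)
    (t : Matrix (Fin 2) (Fin 2) ℚ_[p]) (ht : IsUnit t.det) (htu : t 1 0 = 0)
    (c : ℚ_[p]) (hc : (p : ℝ) ^ (n : ℤ) < ‖c‖)
    (g : Matrix (Fin 2) (Fin 2) ℚ_[p]) (hg : g = t * !![1, 0; c, 1]) :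
    ∃ x : ℚ_[p], ‖x‖ ≤ (p : ℝ) ^ (-(n : ℤ)) ∧ (g * !![1, x; 0, 1]) 1 1 = 0 ∧
      ∃ (h : Matrix (Fin 2) (Fin 2) ℚ_[p]) (y : ℚ_[p]),
        IsUnit h.det ∧ h 1 1 = 0 ∧ ‖y‖ ≤ (p : ℝ) ^ (-(n : ℤ)) ∧
        g = h * !![1, y; 0, 1] := by
  have hp : (1:ℝ) < p := by exact_mod_cast (Fact.out : p.Prime).one_lt
  have hppos : (0:ℝ) < p := by linarith
  have hpn : (0:ℝ) < (p:ℝ) ^ (n:ℤ) := zpow_pos hppos _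
  have hc0 : c ≠ 0 := by
    intro h; rw [h, norm_zero] at hc; linarith
  have hxnorm : ‖c⁻¹‖ ≤ (p : ℝ) ^ (-(n : ℤ)) := by
    rw [norm_inv, _root_.zpow_neg]
    rw [inv_le_inv₀ (lt_trans hpn hc) hpn]
    exact hc.le
  have hg11 : (g * !![1, -c⁻¹; 0, 1]) 1 1 = 0 := by
    subst hg
    simp [Matrix.mul_apply, Fin.sum_univ_two, htu]
    field_simp
    ring
  refine ⟨-c⁻¹, by simpa using hxnorm, hg11, g * !![1, -c⁻¹; 0, 1], c⁻¹, ?_, hg11, hxnorm, ?_⟩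
  · rw [det_mul, hg, det_mul]
    have : (!![1, 0; c, 1] : Matrix (Fin 2) (Fin 2) ℚ_[p]).det = 1 := by
      simp [Matrix.det_fin_two_of]
    have h2 : (!![1, -c⁻¹; 0, 1] : Matrix (Fin 2) (Fin 2) ℚ_[p]).det = 1 := by
      simp [Matrix.det_fin_two_of]
    rw [this, h2, mul_one, mul_one]
    exact ht
  · rw [Matrix.mul_assoc]
    have : (!![1, -c⁻¹; 0, 1] : Matrix (Fin 2) (Fin 2) ℚ_[p]) * !![1, c⁻¹; 0, 1] = 1 := by
      ext i j
      fin_cases i <;> fin_cases j <;> simp [Matrix.mul_apply, Fin.sum_univ_two]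
    rw [this, mul_one]
end
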